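/- Fix d ≥ 3 and define u_n(d) for n ≥ 1 by u_1(d) = 1 and the recurrence ((2n-3)!!)^{d-1} + ∑_{k=2}^{n} C(n-1,k-1)·((2n-2k-1)!!/k!)^{d-1}·2^k·u_k(d) = ((2n-1)!!)^{d-1} for n > 1. Then u_n(d) ~ 2^{-dn}·((2n)!)^{d-1} as n → ∞. -/

import Mathlib

open Nat Filter

/-- `(2n-1)!! = 1·3·5⋯(2n-1)`, the product of the first `n` odd positive integers. -/
def oddDF (n : ℕ) : ℕ := ∏ i ∈ Finset.range n, (2 * i + 1)

lemma oddDF_zero : oddDF 0 = 1 := rfl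

lemma oddDF_succ (n : ℕ) : oddDF (n + 1) = oddDF n * (2 * n + 1) :=
  Finset.prod_range_succ _ _

lemma oddDF_pos (n : ℕ) : 0 < oddDF n :=
  Finset.prod_pos fun i _ => Nat.succ_pos _

lemma factorial_two_mul (n : ℕ) : (2 * n)! = 2 ^ n * n ! * oddDF n := by
  induction n with
  | zero => rfl
  | succ n ih =>
    have : 2 * (n + 1) = (2 * n + 1) + 1 := by ring
    rw [this, Nat.factorial_succ, Nat.factorial_succ, ih, oddDF_succ, Nat.factorial_succ]
    ring

lemma oddDF_choose (n k : ℕ) (hk : k ≤ n) :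
    Nat.choose (2 * n) (2 * k) * (oddDF k * oddDF (n - k)) = Nat.choose n k * oddDF n := by
  have h1 : Nat.choose (2 * n) (2 * k) * (2 * k)! * (2 * (n - k))! = (2 * n)! := by
    have := Nat.choose_mul_factorial_mul_factorial (Nat.mul_le_mul_left 2 hk)
    rwa [show 2 * n - 2 * k = 2 * (n - k) by omega] at this
  have h2 : Nat.choose n k * k ! * (n - k)! = n ! := Nat.choose_mul_factorial_mul_factorial hk
  have key : (Nat.choose (2 * n) (2 * k) * (oddDF k * oddDF (n - k))) * (2 ^ n * (k ! * (n - k)!))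
      = (Nat.choose n k * oddDF n) * (2 ^ n * (k ! * (n - k)!)) := by
    calc (Nat.choose (2 * n) (2 * k) * (oddDF k * oddDF (n - k))) * (2 ^ n * (k ! * (n - k)!))
        = Nat.choose (2 * n) (2 * k) * ((2 ^ k * k ! * oddDF k) * (2 ^ (n - k) * (n - k)! * oddDF (n - k))) := by
          rw [show (2:ℕ) ^ n = 2 ^ k * 2 ^ (n - k) by rw [← pow_add]; congr 1; omega]
          ring
      _ = Nat.choose (2 * n) (2 * k) * ((2 * k)! * (2 * (n - k))!) := by
          rw [← factorial_two_mul, ← factorial_two_mul]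
      _ = (2 * n)! := by rw [← h1]; ring
      _ = 2 ^ n * n ! * oddDF n := factorial_two_mul n
      _ = (Nat.choose n k * oddDF n) * (2 ^ n * (k ! * (n - k)!)) := by rw [← h2]; ring
  exact Nat.eq_of_mul_eq_mul_right (by positivity) key

lemma choose_sq_le (n k : ℕ) : Nat.choose n k ^ 2 ≤ Nat.choose (2 * n) (2 * k) := by
  have := Nat.add_choose_eq n n (2 * k)
  rw [show n + n = 2 * n by ring] at this
  rw [this]
  have hmem : (k, k) ∈ Finset.HasAntidiagonal.antidiagonal (2 * k) := by
    simp [Finset.HasAntidiagonal.mem_antidiagonal]; ring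
  calc Nat.choose n k ^ 2 = n.choose (k, k).1 * n.choose (k, k).2 := by ring
    _ ≤ _ := Finset.single_le_sum (f := fun ij => n.choose ij.1 * n.choose ij.2) (fun i _ => Nat.zero_le _) hmem

lemma choose_le_of_le_of_two_mul_le {n r k : ℕ} (hrk : r ≤ k) (hk : 2 * k ≤ n) :
    Nat.choose n r ≤ Nat.choose n k := by
  induction k, hrk using Nat.le_induction with
  | base => exact le_refl _
  | succ m hm ih =>
    have h1 : Nat.choose n r ≤ Nat.choose n m := ih (by omega)
    have h2 : Nat.choose n m ≤ Nat.choose n (m + 1) :=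
      Nat.choose_le_succ_of_lt_half_left (by omega)
    omega

lemma choose_two_le {n k : ℕ} (h2 : 2 ≤ k) (hk : k + 2 ≤ n) :
    Nat.choose n 2 ≤ Nat.choose n k := by
  rcases le_or_gt (2 * k) n with h | h
  · exact choose_le_of_le_of_two_mul_le h2 h
  · rw [← Nat.choose_symm (by omega : k ≤ n)]
    exact choose_le_of_le_of_two_mul_le (by omega) (by omega)

theorem stmt12 (d : ℕ) (hd : 3 ≤ d) (u : ℕ → ℝ) (hu1 : u 1 = 1)
    (hrec : ∀ n : ℕ, 1 < n →
      (oddDF (n - 1) : ℝ) ^ (d - 1) +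
        ∑ k ∈ Finset.Icc 2 n,
          ((n - 1).choose (k - 1) : ℝ) * ((oddDF (n - k) : ℝ) / (k ! : ℝ)) ^ (d - 1) *
            2 ^ k * u k =
        (oddDF n : ℝ) ^ (d - 1)) :
    Tendsto
      (fun n : ℕ => u n / (((2 : ℝ) ^ (d * n))⁻¹ * ((2 * n)! : ℝ) ^ (d - 1)))
      atTop (nhds 1) := by
  have h2e : 2 ≤ d - 1 := by omega
  set w : ℕ → ℝ := fun n => u n * 2 ^ n / ((n ! : ℝ) * (oddDF n : ℝ)) ^ (d - 1) with hw
  have hposF : ∀ n : ℕ, (0:ℝ) < ((n ! : ℝ) * (oddDF n : ℝ)) ^ (d - 1) := by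
    intro n
    have h1 : (0:ℝ) < (n ! : ℝ) := by exact_mod_cast Nat.factorial_pos n
    have h2 : (0:ℝ) < (oddDF n : ℝ) := by exact_mod_cast oddDF_pos n
    positivity
  have hu : ∀ k : ℕ, u k * 2 ^ k = w k * ((k ! : ℝ) * (oddDF k : ℝ)) ^ (d - 1) := by
    intro k
    simp only [hw]
    rw [div_mul_cancel₀ _ (ne_of_gt (hposF k))]
  -- transformed recurrence
  have key : ∀ m : ℕ, 1 ≤ m →
      (oddDF m : ℝ) ^ (d-1)
        + (∑ k ∈ Finset.Icc 2 m,
            (m.choose (k-1) : ℝ) * ((oddDF (m+1-k) : ℝ) * (oddDF k : ℝ)) ^ (d-1) * w k)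
        + (oddDF (m+1) : ℝ) ^ (d-1) * w (m+1)
      = (oddDF (m+1) : ℝ) ^ (d-1) := by
    intro m hm
    have h := hrec (m+1) (by omega)
    simp only [Nat.add_sub_cancel] at h
    have hterm : ∀ k ∈ Finset.Icc 2 (m+1),
        (m.choose (k-1) : ℝ) * ((oddDF (m+1-k) : ℝ) / (k ! : ℝ)) ^ (d-1) * 2 ^ k * u k
          = (m.choose (k-1) : ℝ) * ((oddDF (m+1-k) : ℝ) * (oddDF k : ℝ)) ^ (d-1) * w k := by
      intro k _
      have h2 := hu k
      have hk0 : ((k)! : ℝ) ≠ 0 := by exact_mod_cast (Nat.factorial_pos k).ne'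
      calc (m.choose (k-1) : ℝ) * ((oddDF (m+1-k) : ℝ) / (k ! : ℝ)) ^ (d-1) * 2 ^ k * u k
          = (m.choose (k-1) : ℝ) * ((oddDF (m+1-k) : ℝ))^(d-1) * (u k * 2 ^ k) / ((k:ℕ)! : ℝ)^(d-1) := by
            rw [div_pow]; ring
        _ = (m.choose (k-1) : ℝ) * ((oddDF (m+1-k) : ℝ))^(d-1) *
              (w k * (((k:ℕ)! : ℝ)^(d-1) * (oddDF k : ℝ)^(d-1))) / ((k:ℕ)! : ℝ)^(d-1) := by
            rw [h2, mul_pow]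
        _ = (m.choose (k-1) : ℝ) * ((oddDF (m+1-k) : ℝ) * (oddDF k : ℝ)) ^ (d-1) * w k := by
            rw [mul_pow]
            field_simp
    rw [Finset.sum_congr rfl hterm] at h
    rw [Finset.sum_Icc_succ_top (by omega : 2 ≤ m+1)] at h
    simp only [Nat.add_sub_cancel, Nat.choose_self, Nat.sub_self, oddDF_zero, Nat.cast_one,
      one_mul] at h
    linarith [h]
  -- bound on coefficients
  have cbound' : ∀ n k : ℕ, 1 ≤ k → k ≤ n →
      ((n-1).choose (k-1) : ℝ) * ((oddDF (n-k) : ℝ) * (oddDF k : ℝ)) ^ (d-1) * (n.choose k : ℝ)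
        ≤ (oddDF n : ℝ) ^ (d-1) := by
    intro n k hk1 hkn
    have hidN := oddDF_choose n k hkn
    have hid : ((2*n).choose (2*k) : ℝ) * ((oddDF k : ℝ) * (oddDF (n-k) : ℝ))
        = (n.choose k : ℝ) * (oddDF n : ℝ) := by exact_mod_cast congrArg (Nat.cast (R := ℝ)) hidN
    set x : ℝ := (n.choose k : ℝ) with hxdef
    set y : ℝ := ((2*n).choose (2*k) : ℝ) with hydef
    have hx1 : (1:ℝ) ≤ x := by
      have := Nat.choose_pos hkn
      rw [hxdef]; exact_mod_cast this
    have hy : x^2 ≤ y := by rw [hxdef, hydef]; exact_mod_cast choose_sq_le n k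
    have hy0 : (0:ℝ) < y := by nlinarith
    have ha0 : (0:ℝ) < (oddDF n : ℝ) := by exact_mod_cast oddDF_pos n
    have hC : ((n-1).choose (k-1) : ℝ) ≤ x := by
      have hp := Nat.choose_succ_succ (n-1) (k-1)
      rw [Nat.succ_eq_add_one, Nat.succ_eq_add_one, show n-1+1 = n by omega,
        show k-1+1 = k by omega] at hp
      rw [hxdef]
      exact_mod_cast (by omega : (n-1).choose (k-1) ≤ n.choose k)
    have hCnn : (0:ℝ) ≤ ((n-1).choose (k-1) : ℝ) := by positivity
    have hP : (oddDF (n-k) : ℝ) * (oddDF k : ℝ) = x / y * (oddDF n : ℝ) := by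
      rw [div_mul_eq_mul_div, eq_div_iff hy0.ne']
      linear_combination hid
    rw [hP, mul_pow, div_pow]
    have hcore : ((n-1).choose (k-1) : ℝ) * x^(d-1) * x ≤ y^(d-1) := by
      have e1 : ((n-1).choose (k-1) : ℝ) * x^(d-1) * x ≤ x^(d+1) := by
        calc ((n-1).choose (k-1) : ℝ) * x^(d-1) * x ≤ x * x^(d-1) * x := by
              apply mul_le_mul_of_nonneg_right (mul_le_mul_of_nonneg_right hC (by positivity))
              linarith
          _ = x^(d+1) := by rw [show d+1 = 1 + (d-1) + 1 by omega]; ring_nf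
      have e2 : x^(d+1) ≤ x^(2*(d-1)) := pow_le_pow_right₀ hx1 (by omega)
      have e3 : x^(2*(d-1)) = (x^2)^(d-1) := by rw [← pow_mul]
      have e4 : (x^2)^(d-1) ≤ y^(d-1) := pow_le_pow_left₀ (by positivity) hy _
      linarith
    have hyp : (0:ℝ) < y^(d-1) := by positivity
    calc ((n-1).choose (k-1) : ℝ) * (x^(d-1)/y^(d-1) * (oddDF n : ℝ)^(d-1)) * x
        = (((n-1).choose (k-1) : ℝ) * x^(d-1) * x / y^(d-1)) * (oddDF n : ℝ)^(d-1) := by ring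
      _ ≤ 1 * (oddDF n : ℝ)^(d-1) := by
          apply mul_le_mul_of_nonneg_right _ (by positivity)
          rw [div_le_one hyp]
          exact hcore
      _ = (oddDF n : ℝ)^(d-1) := one_mul _
  -- the main estimate
  have est : ∀ n : ℕ, 2 ≤ n → |w n - 1| ≤ 1/(2*(n:ℝ)-1)
      + ∑ k ∈ Finset.Icc 2 (n-1), ((n.choose k : ℝ))⁻¹ * |w k| := by
    intro n hn
    obtain ⟨m, rfl⟩ : ∃ m, n = m + 1 := ⟨n-1, by omega⟩
    have hm : 1 ≤ m := by omega
    have hkey := key m hm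
    simp only [Nat.add_sub_cancel]
    have ha0 : (0:ℝ) < (oddDF (m+1) : ℝ) := by exact_mod_cast oddDF_pos (m+1)
    have hone : (1:ℝ) ≤ (oddDF (m+1) : ℝ) := by exact_mod_cast oddDF_pos (m+1)
    have hA1 : (1:ℝ) ≤ (oddDF (m+1) : ℝ)^(d-1) := one_le_pow₀ hone
    have hApos : (0:ℝ) < (oddDF (m+1) : ℝ)^(d-1) := by positivity
    set A : ℝ := (oddDF (m+1) : ℝ)^(d-1) with hAdef
    set S : ℝ := ∑ k ∈ Finset.Icc 2 m,
      (m.choose (k-1):ℝ) * ((oddDF (m+1-k):ℝ) * (oddDF k:ℝ))^(d-1) * w k with hSdef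
    have heq : (w (m+1) - 1) * A = -((oddDF m:ℝ)^(d-1) + S) := by
      linear_combination hkey
    have habs : |w (m+1) - 1| * A = |(oddDF m:ℝ)^(d-1) + S| := by
      rw [← abs_of_pos hApos, ← abs_mul, heq, abs_neg]
    have hB : (oddDF m : ℝ)^(d-1) ≤ 1/(2*((m:ℝ)+1)-1) * A := by
      have hodd : (oddDF (m+1) : ℝ) = (oddDF m : ℝ) * (2*(m:ℝ)+1) := by
        rw [oddDF_succ]; push_cast; ring
      have h2m : (1:ℝ) ≤ 2*(m:ℝ)+1 := by have : (0:ℝ) ≤ (m:ℝ) := Nat.cast_nonneg m; linarith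
      have hle : (2*(m:ℝ)+1) ≤ (2*(m:ℝ)+1)^(d-1) := le_self_pow₀ h2m (by omega)
      have hBpos : (0:ℝ) ≤ (oddDF m : ℝ)^(d-1) := by positivity
      rw [hAdef, hodd, mul_pow, show 2*((m:ℝ)+1)-1 = 2*(m:ℝ)+1 by ring]
      rw [div_mul_eq_mul_div, one_mul, le_div_iff₀ (by linarith)]
      calc (oddDF m : ℝ)^(d-1) * (2*(m:ℝ)+1) ≤ (oddDF m : ℝ)^(d-1) * (2*(m:ℝ)+1)^(d-1) :=
            mul_le_mul_of_nonneg_left hle hBpos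
        _ = _ := rfl
    have hS : |S| ≤ (∑ k ∈ Finset.Icc 2 m, (((m+1).choose k : ℝ))⁻¹ * |w k|) * A := by
      calc |S| ≤ ∑ k ∈ Finset.Icc 2 m,
          |(m.choose (k-1):ℝ) * ((oddDF (m+1-k):ℝ) * (oddDF k:ℝ))^(d-1) * w k| := by
            rw [hSdef]; exact Finset.abs_sum_le_sum_abs _ _
        _ ≤ ∑ k ∈ Finset.Icc 2 m, (((m+1).choose k : ℝ))⁻¹ * |w k| * A := by
            refine Finset.sum_le_sum fun k hk => ?_
            obtain ⟨hk2, hkm⟩ := Finset.mem_Icc.mp hk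
            have hcp : (0:ℝ) < ((m+1).choose k : ℝ) := by
              exact_mod_cast Nat.choose_pos (by omega : k ≤ m+1)
            have hcb := cbound' (m+1) k (by omega) (by omega)
            rw [Nat.add_sub_cancel] at hcb
            have hnn : (0:ℝ) ≤ (m.choose (k-1):ℝ) * ((oddDF (m+1-k):ℝ) * (oddDF k:ℝ))^(d-1) := by
              positivity
            rw [abs_mul, abs_of_nonneg hnn]
            have hc2 : (m.choose (k-1):ℝ) * ((oddDF (m+1-k):ℝ) * (oddDF k:ℝ))^(d-1)
                ≤ (((m+1).choose k : ℝ))⁻¹ * A := by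
              rw [inv_mul_eq_div, le_div_iff₀ hcp]
              exact hcb
            calc (m.choose (k-1):ℝ) * ((oddDF (m+1-k):ℝ) * (oddDF k:ℝ))^(d-1) * |w k|
                ≤ (((m+1).choose k : ℝ))⁻¹ * A * |w k| :=
                  mul_le_mul_of_nonneg_right hc2 (abs_nonneg _)
              _ = (((m+1).choose k : ℝ))⁻¹ * |w k| * A := by ring
        _ = _ := by rw [← Finset.sum_mul]
    have hcomb : |w (m+1) - 1| * A ≤
        (1/(2*((m:ℝ)+1)-1) + ∑ k ∈ Finset.Icc 2 m, (((m+1).choose k : ℝ))⁻¹ * |w k|) * A := by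
      rw [habs]
      calc |(oddDF m:ℝ)^(d-1) + S| ≤ (oddDF m:ℝ)^(d-1) + |S| := by
            have := abs_add_le ((oddDF m:ℝ)^(d-1)) S
            have : |(oddDF m:ℝ)^(d-1)| = (oddDF m:ℝ)^(d-1) := abs_of_nonneg (by positivity)
            calc |(oddDF m:ℝ)^(d-1) + S| ≤ |(oddDF m:ℝ)^(d-1)| + |S| := abs_add_le _ _
              _ = (oddDF m:ℝ)^(d-1) + |S| := by rw [this]
        _ ≤ 1/(2*((m:ℝ)+1)-1) * A + (∑ k ∈ Finset.Icc 2 m, (((m+1).choose k : ℝ))⁻¹ * |w k|) * A := by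
            linarith
        _ = _ := by ring
    have := le_of_mul_le_mul_right hcomb hApos
    convert this using 3
    · rfl
    push_cast
    ring
  -- sum of inverse binomials is small
  have sumbound : ∀ n : ℕ, 2 ≤ n →
      ∑ k ∈ Finset.Icc 2 (n-1), ((n.choose k:ℝ))⁻¹ ≤ 3/((n:ℝ)-1) := by
    intro n hn
    rcases eq_or_lt_of_le hn with h2 | h3
    · rw [← h2]
      norm_num
    · have hn3 : 3 ≤ n := h3
      have hxn : (3:ℝ) ≤ (n:ℝ) := by exact_mod_cast hn3
      rw [show n-1 = (n-2)+1 by omega,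
        Finset.sum_Icc_succ_top (by omega : 2 ≤ (n-2)+1)]
      have htop : (n.choose ((n-2)+1) : ℝ)⁻¹ = ((n:ℝ))⁻¹ := by
        rw [show (n-2)+1 = n-1 by omega]
        have h1 : n.choose (n-1) = n.choose 1 := by
          have := Nat.choose_symm (show 1 ≤ n by omega)
          exact this
        rw [h1, Nat.choose_one_right]
      have hch2 : 2 * n.choose 2 = n * (n-1) := by
        have heven : 2 ∣ (n-1) * ((n-1)+1) := (Nat.even_mul_succ_self (n-1)).two_dvd
        rw [show (n-1)+1 = n by omega] at heven
        rw [Nat.choose_two_right]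
        rw [show n * (n-1) = (n-1) * n by ring] at *
        exact Nat.mul_div_cancel' heven
      have hch2R : (n.choose 2 : ℝ) = (n:ℝ) * ((n:ℝ)-1) / 2 := by
        have h1 : ((2 * n.choose 2 : ℕ) : ℝ) = ((n * (n-1) : ℕ) : ℝ) := by
          exact_mod_cast congrArg (Nat.cast (R := ℝ)) hch2
        push_cast [Nat.cast_sub (show 1 ≤ n by omega)] at h1
        linarith
      have hrest : ∑ k ∈ Finset.Icc 2 (n-2), ((n.choose k:ℝ))⁻¹
          ≤ (n:ℝ) * (2/((n:ℝ)*((n:ℝ)-1))) := by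
        have hterm : ∀ k ∈ Finset.Icc 2 (n-2), ((n.choose k:ℝ))⁻¹ ≤ 2/((n:ℝ)*((n:ℝ)-1)) := by
          intro k hk
          obtain ⟨hk2, hkn⟩ := Finset.mem_Icc.mp hk
          have hcle : n.choose 2 ≤ n.choose k := choose_two_le hk2 (by omega)
          have hpos2 : (0:ℝ) < (n.choose 2 : ℝ) := by
            exact_mod_cast Nat.choose_pos (by omega : 2 ≤ n)
          have hcleR : (n.choose 2 : ℝ) ≤ (n.choose k : ℝ) := by exact_mod_cast hcle
          have := one_div_le_one_div_of_le hpos2 hcleR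
          rw [one_div, one_div] at this
          calc ((n.choose k:ℝ))⁻¹ ≤ ((n.choose 2:ℝ))⁻¹ := this
            _ = 2/((n:ℝ)*((n:ℝ)-1)) := by
                rw [hch2R]
                rw [inv_div]
        calc ∑ k ∈ Finset.Icc 2 (n-2), ((n.choose k:ℝ))⁻¹
            ≤ (Finset.Icc 2 (n-2)).card • (2/((n:ℝ)*((n:ℝ)-1))) :=
              Finset.sum_le_card_nsmul _ _ _ hterm
          _ = ((Finset.Icc 2 (n-2)).card : ℝ) * (2/((n:ℝ)*((n:ℝ)-1))) := by
              rw [nsmul_eq_mul]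
          _ ≤ (n:ℝ) * (2/((n:ℝ)*((n:ℝ)-1))) := by
              apply mul_le_mul_of_nonneg_right _ (div_nonneg (by norm_num) (by nlinarith))
              rw [Nat.card_Icc]
              exact_mod_cast (by omega : (n-2)+1-2 ≤ n)
      rw [htop]
      have hfin : (n:ℝ) * (2/((n:ℝ)*((n:ℝ)-1))) + ((n:ℝ))⁻¹ ≤ 3/((n:ℝ)-1) := by
        have hn0 : (0:ℝ) < (n:ℝ) := by linarith
        have hn1 : (0:ℝ) < (n:ℝ)-1 := by linarith
        have hs1 : (n:ℝ) * (2/((n:ℝ)*((n:ℝ)-1))) = 2/((n:ℝ)-1) := by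
          field_simp
        have hs2 : ((n:ℝ))⁻¹ ≤ 1/((n:ℝ)-1) := by
          rw [inv_eq_one_div, div_le_div_iff₀ hn0 hn1]
          linarith
        have hs3 : 2/((n:ℝ)-1) + 1/((n:ℝ)-1) = 3/((n:ℝ)-1) := by ring
        linarith
      linarith
  -- uniform bound on w
  set M : ℝ := 3 + ∑ k ∈ Finset.range 10, |w k| with hM
  have hM3 : 3 ≤ M := le_add_of_nonneg_right (Finset.sum_nonneg fun i _ => abs_nonneg _)
  have hMb : ∀ n : ℕ, |w n| ≤ M := by
    intro n
    induction n using Nat.strong_induction_on with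
    | _ n ih =>
      rcases lt_or_ge n 10 with h | h
      · have h1 : |w n| ≤ ∑ k ∈ Finset.range 10, |w k| :=
          Finset.single_le_sum (f := fun k => |w k|) (fun i _ => abs_nonneg _) (Finset.mem_range.mpr h)
        linarith
      · have h1 := est n (by omega)
        have h2 := sumbound n (by omega)
        have h3 : ∑ k ∈ Finset.Icc 2 (n-1), ((n.choose k:ℝ))⁻¹ * |w k|
            ≤ M * ∑ k ∈ Finset.Icc 2 (n-1), ((n.choose k:ℝ))⁻¹ := by
          rw [Finset.mul_sum]
          refine Finset.sum_le_sum fun k hk => ?_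
          obtain ⟨hk2, hkn⟩ := Finset.mem_Icc.mp hk
          have hik := ih k (by omega)
          have hnn : (0:ℝ) ≤ ((n.choose k:ℝ))⁻¹ := by positivity
          calc ((n.choose k:ℝ))⁻¹ * |w k| ≤ ((n.choose k:ℝ))⁻¹ * M :=
                mul_le_mul_of_nonneg_left hik hnn
            _ = M * ((n.choose k:ℝ))⁻¹ := mul_comm _ _
        have hn10 : (10:ℝ) ≤ (n:ℝ) := by exact_mod_cast h
        have h4 : 3/((n:ℝ)-1) ≤ 1/3 := by
          rw [div_le_div_iff₀ (by linarith) (by norm_num)]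
          linarith
        have h5 : 1/(2*(n:ℝ)-1) ≤ 1 := by
          rw [div_le_one (by linarith)]
          linarith
        have h6 : M * (3/((n:ℝ)-1)) ≤ M * (1/3) :=
          mul_le_mul_of_nonneg_left h4 (by linarith)
        have h7 : M * (∑ k ∈ Finset.Icc 2 (n-1), ((n.choose k:ℝ))⁻¹) ≤ M * (3/((n:ℝ)-1)) :=
          mul_le_mul_of_nonneg_left h2 (by linarith)
        have h8 : |w n| - 1 ≤ |w n - 1| := by
          have := abs_sub_abs_le_abs_sub (w n) 1
          rw [abs_one] at this
          linarith
        linarith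
  -- w tends to 1
  have hfinal : Tendsto w atTop (nhds 1) := by
    rw [← tendsto_sub_nhds_zero_iff]
    apply squeeze_zero_norm' (a := fun n : ℕ => (1 + 6*M)/(n:ℝ))
    · filter_upwards [eventually_ge_atTop 2] with n hn
      have h1 := est n hn
      have h2 := sumbound n hn
      have h3 : ∑ k ∈ Finset.Icc 2 (n-1), ((n.choose k:ℝ))⁻¹ * |w k|
          ≤ M * ∑ k ∈ Finset.Icc 2 (n-1), ((n.choose k:ℝ))⁻¹ := by
        rw [Finset.mul_sum]
        refine Finset.sum_le_sum fun k hk => ?_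
        have hnn : (0:ℝ) ≤ ((n.choose k:ℝ))⁻¹ := by positivity
        calc ((n.choose k:ℝ))⁻¹ * |w k| ≤ ((n.choose k:ℝ))⁻¹ * M :=
              mul_le_mul_of_nonneg_left (hMb k) hnn
          _ = M * ((n.choose k:ℝ))⁻¹ := mul_comm _ _
      have hx2 : (2:ℝ) ≤ (n:ℝ) := by exact_mod_cast hn
      have e1 : 1/(2*(n:ℝ)-1) ≤ 1/(n:ℝ) := by
        rw [div_le_div_iff₀ (by linarith) (by linarith)]
        linarith
      have e2 : M * (3/((n:ℝ)-1)) ≤ 6*M/(n:ℝ) := by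
        rw [mul_div_assoc'] at *
        rw [div_le_div_iff₀ (by linarith) (by linarith)]
        nlinarith
      have h7 : M * (∑ k ∈ Finset.Icc 2 (n-1), ((n.choose k:ℝ))⁻¹) ≤ M * (3/((n:ℝ)-1)) :=
        mul_le_mul_of_nonneg_left h2 (by linarith)
      have : ‖w n - 1‖ = |w n - 1| := rfl
      rw [this]
      have hsum : 1/(n:ℝ) + 6*M/(n:ℝ) = (1 + 6*M)/(n:ℝ) := by ring
      linarith
    · exact tendsto_const_div_atTop_nhds_zero_nat (1+6*M)
  -- identification of the target with w
  have hident : ∀ n : ℕ, u n / (((2:ℝ)^(d*n))⁻¹ * ((2*n)! : ℝ)^(d-1)) = w n := by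
    intro n
    have hfactN := factorial_two_mul n
    have hfact : ((2*n)! : ℝ) = 2^n * (n ! : ℝ) * (oddDF n : ℝ) := by
      exact_mod_cast congrArg (Nat.cast (R := ℝ)) hfactN
    have hsplit : (2:ℝ)^(d*n) = 2^(n*(d-1)) * 2^n := by
      obtain ⟨e, rfl⟩ : ∃ e, d = e + 1 := ⟨d-1, by omega⟩
      rw [← pow_add]
      congr 1
      rw [Nat.add_sub_cancel]
      ring
    have hF : (0:ℝ) < ((n ! : ℝ) * (oddDF n : ℝ)) ^ (d - 1) := hposF n
    have h2p : (0:ℝ) < (2:ℝ)^n := by positivity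
    rw [hfact, hw]
    rw [show (2:ℝ)^n * (n ! : ℝ) * (oddDF n : ℝ) = 2^n * ((n ! : ℝ) * (oddDF n : ℝ)) by ring]
    rw [mul_pow, ← pow_mul, hsplit]
    field_simp
  exact Filter.Tendsto.congr (fun n => (hident n).symm) hfinal
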